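/- arXiv:2005.06559 — 2 statements merged into one kernel-verified Lean document; each statement's English description precedes it below -/
import Mathlib

section
/- In the setting of the large Ponomarev construction with 0 < H^h(C_A) < ∞, the exceptional set S = {x ∈ C_A : c_i(x) eventually constant for some i} satisfies H^h(S) = 0. -/
open Set Filter MeasureTheory
open scoped ENNReal

private lemma key_sum (r : ℕ → ℝ) (hkey : ∀ k, 2 * r (k + 1) < r k) :
    ∀ m k0, k0 ≤ m → (∑ t ∈ Finset.Ioc k0 m, r t) + 2 * r (m + 1) < r k0 := by
  intro m
  induction m with
  | zero =>
    intro k0 hk0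
    interval_cases k0
    simpa using hkey 0
  | succ m ih =>
    intro k0 hk0
    rcases Nat.lt_or_ge k0 (m + 1) with hlt | hge
    · have h1 : k0 ≤ m := Nat.lt_succ_iff.mp hlt
      have h2 := ih k0 h1
      have h3 := hkey (m + 1)
      rw [Finset.sum_Ioc_succ_top h1]
      linarith
    · have : k0 = m + 1 := le_antisymm hk0 hge
      subst this
      simpa using hkey (m + 1)

private lemma sep {n : ℕ} (r : ℕ → ℝ) (hrpos : ∀ k, 0 < r k)
    (hkey : ∀ k, 2 * r (k + 1) < r k) (m : ℕ)
    (v w : Fin (m + 1) → Fin n → ℝ)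
    (hv : ∀ i j, v i j = 1 ∨ v i j = -1) (hw : ∀ i j, w i j = 1 ∨ w i j = -1)
    (x : Fin n → ℝ)
    (hxv : x ∈ Metric.closedBall (∑ i : Fin (m + 1), (r i / 2) • v i) (r (m + 1)))
    (hxw : x ∈ Metric.closedBall (∑ i : Fin (m + 1), (r i / 2) • w i) (r (m + 1))) :
    v = w := by
  have hdist : dist (∑ i : Fin (m + 1), (r i / 2) • v i) (∑ i : Fin (m + 1), (r i / 2) • w i)
      ≤ 2 * r (m + 1) := by
    have h1 : dist x (∑ i : Fin (m + 1), (r i / 2) • v i) ≤ r (m + 1) := hxv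
    have h2 : dist x (∑ i : Fin (m + 1), (r i / 2) • w i) ≤ r (m + 1) := hxw
    calc dist (∑ i : Fin (m + 1), (r i / 2) • v i) (∑ i : Fin (m + 1), (r i / 2) • w i)
        ≤ dist (∑ i : Fin (m + 1), (r i / 2) • v i) x
          + dist x (∑ i : Fin (m + 1), (r i / 2) • w i) := dist_triangle _ _ _
      _ ≤ r (m + 1) + r (m + 1) := add_le_add (by rwa [dist_comm]) h2
      _ = 2 * r (m + 1) := by ring
  have main : ∀ k : Fin (m + 1), (∀ k' : Fin (m + 1), k' < k → v k' = w k') → v k = w k := by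
    intro k ihk
    by_contra hne
    obtain ⟨j, hj⟩ := Function.ne_iff.mp hne
    set E : Fin (m + 1) → ℝ := fun t => (r t / 2) * (v t j - w t j) with hE
    have hsumE : (∑ t, E t)
        = (∑ i : Fin (m + 1), (r i / 2) • v i) j - (∑ i : Fin (m + 1), (r i / 2) • w i) j := by
      simp only [Finset.sum_apply, Pi.smul_apply, smul_eq_mul, ← Finset.sum_sub_distrib, hE,
        mul_sub]
    have habs : |∑ t, E t| ≤ 2 * r (m + 1) := by
      rw [hsumE, ← Real.dist_eq]
      exact (dist_le_pi_dist _ _ j).trans hdist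
    have hdiff : v k j - w k j = 2 ∨ v k j - w k j = -2 := by
      rcases hv k j with h1 | h1 <;> rcases hw k j with h2 | h2 <;>
        rw [h1, h2] <;> norm_num
      · exact hj (h1.trans h2.symm)
      · exact hj (h1.trans h2.symm)
    have hEk : |E k| = r k := by
      rcases hdiff with h2 | h2 <;> rw [hE] <;> simp only [h2]
      · rw [show r (k : ℕ) / 2 * 2 = r k by ring, abs_of_pos (hrpos _)]
      · rw [show r (k : ℕ) / 2 * (-2) = -(r k) by ring, abs_neg, abs_of_pos (hrpos _)]
    have hsplit : E k = (∑ t, E t) - ∑ t ∈ Finset.univ.erase k, E t := by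
      rw [← Finset.add_sum_erase _ E (Finset.mem_univ k)]
      ring
    have hrest : ∑ t ∈ Finset.univ.erase k, |E t| ≤ ∑ t ∈ Finset.Ioc (k : ℕ) m, r t := by
      have hss : Finset.univ.filter (fun t : Fin (m + 1) => k < t) ⊆ Finset.univ.erase k := by
        intro t ht
        rw [Finset.mem_filter] at ht
        exact Finset.mem_erase.mpr ⟨ne_of_gt ht.2, Finset.mem_univ t⟩
      have hzero : ∀ t ∈ Finset.univ.erase k,
          t ∉ Finset.univ.filter (fun t : Fin (m + 1) => k < t) → |E t| = 0 := by
        intro t ht hnt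
        have h1 : t ≠ k := (Finset.mem_erase.mp ht).1
        have h2 : ¬ k < t := by
          intro hh
          exact hnt (Finset.mem_filter.mpr ⟨Finset.mem_univ t, hh⟩)
        have h3 : t < k := lt_of_le_of_ne (not_lt.mp h2) h1
        rw [hE]
        simp [ihk t h3]
      have e1 : ∑ t ∈ Finset.univ.erase k, |E t|
          = ∑ t ∈ Finset.univ.filter (fun t : Fin (m + 1) => k < t), |E t| :=
        (Finset.sum_subset hss hzero).symm
      have e2 : ∑ t ∈ Finset.univ.filter (fun t : Fin (m + 1) => k < t), |E t|
          ≤ ∑ t ∈ Finset.univ.filter (fun t : Fin (m + 1) => k < t), r t := by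
        apply Finset.sum_le_sum
        intro t _
        have hb : |v t j - w t j| ≤ 2 := by
          rcases hv t j with h1 | h1 <;> rcases hw t j with h2 | h2 <;> rw [h1, h2] <;> norm_num
        rw [hE]
        calc |r (t : ℕ) / 2 * (v t j - w t j)| = r t / 2 * |v t j - w t j| := by
              rw [abs_mul, abs_of_pos (by have := hrpos (t:ℕ); linarith : (0:ℝ) < r (t:ℕ) / 2)]
          _ ≤ r t / 2 * 2 := by
              have := hrpos (t : ℕ)
              nlinarith
          _ = r t := by ring
      have e3 : ∑ t ∈ Finset.univ.filter (fun t : Fin (m + 1) => k < t), r (t : ℕ)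
          = ∑ t ∈ Finset.Ioc (k : ℕ) m, r t := by
        rw [Finset.sum_filter]
        have e4 : ∀ t : Fin (m + 1), (if k < t then r (t : ℕ) else 0)
            = (fun s : ℕ => if (k : ℕ) < s then r s else 0) (t : ℕ) := by
          intro t
          show (if k < t then r (t : ℕ) else 0) = if (k : ℕ) < (t : ℕ) then r (t : ℕ) else 0
          simp only [Fin.lt_def]
        rw [Finset.sum_congr rfl fun t _ => e4 t,
          Fin.sum_univ_eq_sum_range (fun s : ℕ => if (k : ℕ) < s then r s else 0) (m + 1),
          ← Finset.sum_filter]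
        congr 1
        ext t
        simp only [Finset.mem_filter, Finset.mem_range, Finset.mem_Ioc]
        omega
      calc ∑ t ∈ Finset.univ.erase k, |E t|
          = ∑ t ∈ Finset.univ.filter (fun t : Fin (m + 1) => k < t), |E t| := e1
        _ ≤ ∑ t ∈ Finset.univ.filter (fun t : Fin (m + 1) => k < t), r t := e2
        _ = ∑ t ∈ Finset.Ioc (k : ℕ) m, r t := e3
    have habs2 : |∑ t ∈ Finset.univ.erase k, E t| ≤ ∑ t ∈ Finset.Ioc (k : ℕ) m, r t :=
      (Finset.abs_sum_le_sum_abs _ _).trans hrest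
    have hks := key_sum r hkey m k (Nat.lt_succ_iff.mp k.isLt)
    have : r (k : ℕ) ≤ 2 * r (m + 1) + ∑ t ∈ Finset.Ioc (k : ℕ) m, r t := by
      calc r (k : ℕ) = |E k| := hEk.symm
        _ = |(∑ t, E t) - ∑ t ∈ Finset.univ.erase k, E t| := by rw [← hsplit]
        _ ≤ |∑ t, E t| + |∑ t ∈ Finset.univ.erase k, E t| := abs_sub _ _
        _ ≤ 2 * r (m + 1) + ∑ t ∈ Finset.Ioc (k : ℕ) m, r t := add_le_add habs habs2
    linarith
  have H : ∀ K : ℕ, ∀ hK : K < m + 1, v ⟨K, hK⟩ = w ⟨K, hK⟩ := by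
    intro K
    induction K using Nat.strong_induction_on with
    | _ K ih =>
      intro hK
      refine main ⟨K, hK⟩ ?_
      intro k' hk'
      have h1 := ih (k' : ℕ) hk' k'.isLt
      simpa using h1
  funext k
  have := H (k : ℕ) k.isLt
  simpa using this

theorem stmt16 (n : ℕ) (hn : 1 ≤ n)
    (h : ℝ → ℝ) (hcont : ContinuousOn h (Ici 0)) (hmono : MonotoneOn h (Ici 0))
    (h0 : h 0 = 0) (hnonneg : ∀ t ≥ (0:ℝ), 0 ≤ h t)
    (a : ℕ → ℝ) (hpos : ∀ k, 0 < a k) (ha0 : a 0 = 1)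
    (hanti : StrictAnti a) (halim : Tendsto a atTop (nhds 0))
    (r : ℕ → ℝ) (hr : ∀ k, r k = a k / 2 ^ k)
    (CA : Set (Fin n → ℝ))
    (hCA : CA = ⋂ k : ℕ, ⋃ v ∈ {v : Fin (k + 1) → Fin n → ℝ | ∀ i j, v i j = 1 ∨ v i j = -1},
      Metric.closedBall (∑ i : Fin (k + 1), (r i / 2) • v i) (r (k + 1)))
    (μH : Measure (Fin n → ℝ))
    (hμH : μH = MeasureTheory.Measure.mkMetric (fun d : ℝ≥0∞ => ENNReal.ofReal (h d.toReal)))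
    (hCApos : 0 < μH CA) (hCAfin : μH CA < ⊤)
    (vx : (Fin n → ℝ) → ℕ → Fin n → ℝ)
    (hval : ∀ x ∈ CA, ∀ (j : ℕ) (i : Fin n), vx x j i = 1 ∨ vx x j i = -1)
    (hmem : ∀ x ∈ CA, ∀ k : ℕ,
      x ∈ Metric.closedBall (∑ i : Fin (k + 1), (r i / 2) • vx x i) (r (k + 1)))
    (huniq : ∀ s : ℕ → Fin n → ℝ, (∀ (j : ℕ) (i : Fin n), s j i = 1 ∨ s j i = -1) →
      ∃! x, x ∈ CA ∧ vx x = s) :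
    μH {x ∈ CA | ∃ i : Fin n, ∃ N : ℕ, ∃ c : ℝ, ∀ m ≥ N, vx x m i = c} = 0 := by
  -- basic facts about r
  have hrpos : ∀ k, 0 < r k := by
    intro k; rw [hr]; exact div_pos (hpos k) (by positivity)
  have hkey : ∀ k, 2 * r (k + 1) < r k := by
    intro k
    have h1 : a (k + 1) < a k := hanti (Nat.lt_succ_self k)
    have h2 : (0:ℝ) < 2 ^ k := by positivity
    have e : 2 * (a (k + 1) / 2 ^ (k + 1)) = a (k + 1) / 2 ^ k := by
      rw [pow_succ]
      field_simp
    rw [hr, hr, e]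
    exact div_lt_div_of_pos_right h1 h2
  have hrlim : Tendsto r atTop (nhds 0) := by
    apply squeeze_zero (fun k => (hrpos k).le) (fun k => ?_) halim
    rw [hr]
    exact div_le_self (hpos k).le (one_le_pow₀ one_le_two)
  -- the flip lemma
  have hflip : ∀ x ∈ CA, ∀ (p : ℕ) (i : Fin n),
      (x - Pi.single i (r p * vx x p i)) ∈ CA ∧
      vx (x - Pi.single i (r p * vx x p i)) =
        fun m => if m = p then Function.update (vx x m) i (-(vx x p i)) else vx x m := by
    intro x hx p i
    set c := vx x p i with hc
    set s' : ℕ → Fin n → ℝ :=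
      fun m => if m = p then Function.update (vx x m) i (-c) else vx x m with hs'
    have hcv : c = 1 ∨ c = -1 := by rw [hc]; exact hval x hx p i
    have hs'app : ∀ m, s' m = if m = p then Function.update (vx x m) i (-c) else vx x m := by
      intro m
      rw [hs']
    have hs'val : ∀ m j, s' m j = 1 ∨ s' m j = -1 := by
      intro m j
      rw [hs'app]
      by_cases hm : m = p
      · rw [if_pos hm]
        by_cases hji : j = i
        · subst hji
          rw [Function.update_self]
          rcases hcv with h1 | h1 <;> rw [h1] <;> norm_num
        · rw [Function.update_of_ne hji]
          exact hval x hx m j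
      · rw [if_neg hm]
        exact hval x hx m j
    obtain ⟨z, ⟨hzCA, hzvx⟩, -⟩ := huniq s' hs'val
    have hzeq : z = x - Pi.single i (r p * c) := by
      have key : ∀ K, p ≤ K → dist z (x - Pi.single i (r p * c)) ≤ 2 * r (K + 1) := by
        intro K hK
        have h1 := hmem x hx K
        have h2 := hmem z hzCA K
        rw [hzvx] at h2
        set C1 := ∑ t : Fin (K + 1), (r t / 2) • vx x t with hC1
        set C2 := ∑ t : Fin (K + 1), (r t / 2) • s' t with hC2
        have hC : C1 - C2 = Pi.single i (r p * c) := by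
          rw [hC1, hC2, ← Finset.sum_sub_distrib]
          rw [Finset.sum_eq_single (⟨p, Nat.lt_succ_of_le hK⟩ : Fin (K + 1))]
          · have hsp : s' p = Function.update (vx x p) i (-c) := by
              rw [hs'app, if_pos rfl]
            show (r p / 2) • vx x p - (r p / 2) • s' p = Pi.single i (r p * c)
            rw [hsp]
            funext j
            by_cases hji : j = i
            · subst hji
              simp only [Pi.sub_apply, Pi.smul_apply, smul_eq_mul, Function.update_self,
                Pi.single_eq_same, hc]
              ring
            · simp only [Pi.sub_apply, Pi.smul_apply, smul_eq_mul,
                Function.update_of_ne hji, Pi.single_eq_of_ne hji, sub_self]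
          · intro b _ hb
            have hbp : (b : ℕ) ≠ p := by
              intro hh
              exact hb (Fin.ext hh)
            have he : s' (b : ℕ) = vx x (b : ℕ) := by rw [hs'app, if_neg hbp]
            rw [he, sub_self]
          · intro hcon
            exact absurd (Finset.mem_univ _) hcon
        have hdd : z - (x - Pi.single i (r p * c)) = (z - C2) - (x - C1) := by
          rw [← hC]; abel
        calc dist z (x - Pi.single i (r p * c))
            = ‖(z - C2) - (x - C1)‖ := by rw [dist_eq_norm, hdd]
          _ ≤ ‖z - C2‖ + ‖x - C1‖ := norm_sub_le _ _
          _ ≤ r (K + 1) + r (K + 1) := by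
              apply add_le_add
              · rw [← dist_eq_norm]; exact h2
              · rw [← dist_eq_norm]; exact h1
          _ = 2 * r (K + 1) := by ring
      have hlim : Tendsto (fun K => 2 * r (K + 1)) atTop (nhds 0) := by
        have h1 : Tendsto (fun K => r (K + 1)) atTop (nhds 0) :=
          hrlim.comp (tendsto_add_atTop_nat 1)
        simpa using h1.const_mul 2
      have hd0 : dist z (x - Pi.single i (r p * c)) ≤ 0 :=
        ge_of_tendsto hlim (eventually_atTop.mpr ⟨p, fun K hK => key K hK⟩)
      exact dist_le_zero.mp hd0
    rw [← hzeq]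
    exact ⟨hzCA, hzvx⟩
  -- countability of pattern sets
  have hVfin : ∀ m : ℕ,
      ({v : Fin (m + 1) → Fin n → ℝ | ∀ i j, v i j = 1 ∨ v i j = -1}).Countable := by
    intro m
    have hfin : (Set.pi (univ : Set (Fin (m + 1)))
        (fun _ => Set.pi (univ : Set (Fin n)) (fun _ => ({1, -1} : Set ℝ)))).Finite :=
      Set.Finite.pi fun _ => Set.Finite.pi fun _ =>
        (Set.finite_singleton (-1 : ℝ)).insert 1
    apply Set.Countable.mono _ hfin.countable
    intro v hv
    rw [Set.mem_pi]
    intro i _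
    rw [Set.mem_pi]
    intro j _
    rcases hv i j with h1 | h1 <;> simp [h1]
  -- measurability of CA
  have hCAmeas : MeasurableSet CA := by
    rw [hCA]
    exact MeasurableSet.iInter fun k =>
      MeasurableSet.biUnion (hVfin k) fun v _ => measurableSet_closedBall
  -- the sets U m i c and their characterization
  set U : ℕ → Fin n → ℝ → Set (Fin n → ℝ) := fun m i c =>
    ⋃ v ∈ {v : Fin (m + 1) → Fin n → ℝ |
        (∀ i' j, v i' j = 1 ∨ v i' j = -1) ∧ v (Fin.last m) i = c},
      Metric.closedBall (∑ t : Fin (m + 1), (r t / 2) • v t) (r (m + 1)) with hUdef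
  have hUmeas : ∀ m i c, MeasurableSet (U m i c) := by
    intro m i c
    exact MeasurableSet.biUnion ((hVfin m).mono fun v hv => hv.1)
      fun v _ => measurableSet_closedBall
  have hUchar : ∀ m i c, ∀ x ∈ CA, (x ∈ U m i c ↔ vx x m i = c) := by
    intro m i c x hx
    constructor
    · intro hxU
      rw [hUdef] at hxU
      simp only [mem_iUnion] at hxU
      obtain ⟨v, ⟨hvadm, hvlast⟩, hxb⟩ := hxU
      have hsep := sep r hrpos hkey m v (fun t => vx x t) hvadm
        (fun t j => hval x hx t j) x hxb (hmem x hx m)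
      have h2 := congrFun (congrFun hsep (Fin.last m)) i
      rw [Fin.val_last] at h2
      exact h2.symm.trans hvlast
    · intro hcv
      rw [hUdef]
      simp only [mem_iUnion]
      refine ⟨fun t => vx x t, ⟨fun t j => hval x hx t j, ?_⟩, hmem x hx m⟩
      show vx x ((Fin.last m : Fin (m+1)) : ℕ) i = c
      rw [Fin.val_last]
      exact hcv
  -- the sets S i N c
  set S : Fin n → ℕ → ℝ → Set (Fin n → ℝ) :=
    fun i N c => CA ∩ ⋂ m, ⋂ (_ : N ≤ m), U m i c with hSdef
  have hSmeas : ∀ i N c, MeasurableSet (S i N c) := fun i N c =>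
    hCAmeas.inter (MeasurableSet.iInter fun m => MeasurableSet.iInter fun _ => hUmeas m i c)
  have hSchar : ∀ i N c x, x ∈ S i N c ↔ x ∈ CA ∧ ∀ m, N ≤ m → vx x m i = c := by
    intro i N c x
    rw [hSdef]
    simp only [mem_inter_iff, mem_iInter]
    constructor
    · rintro ⟨hx, hU'⟩
      exact ⟨hx, fun m hm => (hUchar m i c x hx).mp (hU' m hm)⟩
    · rintro ⟨hx, hP⟩
      exact ⟨hx, fun m hm => (hUchar m i c x hx).mpr (hP m hm)⟩
  -- translation invariance
  have htrans : ∀ (t : Fin n → ℝ) (A : Set (Fin n → ℝ)),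
      μH ((fun y => y + t) '' A) = μH A := by
    intro t A
    rw [hμH]
    set mf := fun d : ℝ≥0∞ => ENNReal.ofReal (h d.toReal) with hmf
    have e : ∀ s : Set (Fin n → ℝ),
        Measure.mkMetric (X := Fin n → ℝ) mf s = OuterMeasure.mkMetric mf s :=
      fun s => (congrFun (MeasureTheory.OuterMeasure.coe_mkMetric mf) s).symm
    rw [e, e]
    set iso : (Fin n → ℝ) ≃ᵢ (Fin n → ℝ) := IsometryEquiv.addRight t with hiso
    have himg : (fun y => y + t) '' A = ⇑iso '' A := by
      rw [hiso]
      congr 1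
    rw [himg, ← MeasureTheory.OuterMeasure.comap_apply,
      MeasureTheory.OuterMeasure.isometryEquiv_comap_mkMetric]
  -- each S i N c is null
  have hnull : ∀ (i : Fin n) (N : ℕ) (c : ℝ), (c = 1 ∨ c = -1) → μH (S i N c) = 0 := by
    intro i N c hcval
    by_contra hSne
    set F : ℕ → Set (Fin n → ℝ) :=
      fun j => (fun y => y + (-Pi.single i (r (N + j) * c))) '' S i N c with hF
    have hμF : ∀ j, μH (F j) = μH (S i N c) := fun j => htrans _ _
    have hFprop : ∀ j, ∀ y ∈ F j,
        y ∈ CA ∧ vx y (N + j) i = -c ∧ ∀ m, N ≤ m → m ≠ N + j → vx y m i = c := by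
      rintro j y ⟨x, hxS, rfl⟩
      obtain ⟨hxCA, hxP⟩ := (hSchar i N c x).mp hxS
      have hc' : vx x (N + j) i = c := hxP _ (Nat.le_add_right N j)
      have hfl := hflip x hxCA (N + j) i
      rw [hc'] at hfl
      obtain ⟨hmem', hvx'⟩ := hfl
      have hye : x + -Pi.single i (r (N + j) * c) = x - Pi.single i (r (N + j) * c) := by
        rw [sub_eq_add_neg]
      show x + -Pi.single i (r (N + j) * c) ∈ CA ∧
        vx (x + -Pi.single i (r (N + j) * c)) (N + j) i = -c ∧
        ∀ m, N ≤ m → m ≠ N + j → vx (x + -Pi.single i (r (N + j) * c)) m i = c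
      rw [hye]
      refine ⟨hmem', ?_, ?_⟩
      · rw [hvx']
        simp
      · intro m hm hne
        rw [hvx']
        simp only [if_neg hne]
        exact hxP m hm
    have hFsub : ∀ j, F j ⊆ CA := fun j y hy => (hFprop j y hy).1
    have hc2 : -c ≠ c := by
      rcases hcval with rfl | rfl <;> norm_num
    have hFdisj : Pairwise (Function.onFun Disjoint F) := by
      intro j j' hjj
      rw [Function.onFun, Set.disjoint_left]
      intro y hyj hyj'
      obtain ⟨-, h1, -⟩ := hFprop j y hyj
      obtain ⟨-, -, h2'⟩ := hFprop j' y hyj'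
      have h3 := h2' (N + j) (Nat.le_add_right _ _) (by omega)
      rw [h1] at h3
      exact hc2 h3
    have hFmeas : ∀ j, MeasurableSet (F j) := by
      intro j
      have himg : F j = (fun y => y + Pi.single i (r (N + j) * c)) ⁻¹' (S i N c) := by
        rw [hF]
        ext y
        simp only [Set.mem_image, Set.mem_preimage]
        constructor
        · rintro ⟨x, hx, rfl⟩
          simpa using hx
        · intro hy
          exact ⟨y + Pi.single i (r (N + j) * c), hy, by abel⟩
      rw [himg]
      exact (measurable_add_const _) (hSmeas i N c)
    have hsum : ∑' j : ℕ, μH (F j) ≤ μH CA := by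
      rw [← measure_iUnion hFdisj hFmeas]
      exact measure_mono (iUnion_subset hFsub)
    have htop : ∑' j : ℕ, μH (F j) = ⊤ := by
      rw [tsum_congr hμF]
      exact ENNReal.tsum_const_eq_top_of_ne_zero hSne
    rw [htop] at hsum
    exact absurd (lt_of_le_of_lt hsum hCAfin) (lt_irrefl _)
  -- conclusion
  have hsubset : {x ∈ CA | ∃ i : Fin n, ∃ N : ℕ, ∃ c : ℝ, ∀ m ≥ N, vx x m i = c} ⊆
      ⋃ i : Fin n, ⋃ N : ℕ, (S i N 1 ∪ S i N (-1)) := by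
    rintro x ⟨hx, i, N, c, hcc⟩
    have hcN : vx x N i = c := hcc N le_rfl
    have hcv : c = 1 ∨ c = -1 := by
      rcases hval x hx N i with h1 | h1 <;> rw [hcN] at h1
      · exact Or.inl h1
      · exact Or.inr h1
    refine mem_iUnion.mpr ⟨i, mem_iUnion.mpr ⟨N, ?_⟩⟩
    rcases hcv with rfl | rfl
    · exact Or.inl ((hSchar i N 1 x).mpr ⟨hx, fun m hm => hcc m hm⟩)
    · exact Or.inr ((hSchar i N (-1) x).mpr ⟨hx, fun m hm => hcc m hm⟩)
  refine measure_mono_null hsubset ?_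
  refine measure_iUnion_null fun i => measure_iUnion_null fun N => ?_
  exact measure_union_null (hnull i N 1 (Or.inl rfl)) (hnull i N (-1) (Or.inr rfl))
end

section
/- Let a_k be strictly decreasing positive with a_0 = 1 and a_k → 0. Then sup_{0<ε≤n-1} ε · Σ_{k=1}^∞ 2^{nk} ∫_{2^{-k}a_k}^{2^{-k}a_{k-1}} (2^{-k-1}/t)^{n-ε} t^{n-1} dt < ∞. -/
open Set Filter

theorem stmt19 (n : ℕ) (hn : 2 ≤ n)
    (a : ℕ → ℝ) (hpos : ∀ k, 0 < a k) (ha0 : a 0 = 1)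
    (hanti : StrictAnti a) (halim : Tendsto a atTop (nhds 0)) :
    ∃ M : ℝ, ∀ ε ∈ Ioc (0:ℝ) ((n:ℝ) - 1),
      ε * ∑' k : ℕ, (2:ℝ) ^ (n * (k + 1)) *
        ∫ t in (a (k + 1) / 2 ^ (k + 1))..(a k / 2 ^ (k + 1)),
          ((1 / 2 ^ (k + 2)) / t) ^ ((n:ℝ) - ε) * t ^ (n - 1) ≤ M := by
  refine ⟨1, ?_⟩
  rintro ε ⟨hε0, hεle⟩
  have hn1 : (1:ℝ) ≤ (n:ℝ) := by exact_mod_cast Nat.one_le_of_lt hn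
  have hεn : ε < (n:ℝ) := by linarith
  -- pointwise identification of each summand
  have hC : ∀ k : ℕ, (2:ℝ) ^ (n * (k + 1)) *
      ∫ t in (a (k + 1) / 2 ^ (k + 1))..(a k / 2 ^ (k + 1)),
        ((1 / 2 ^ (k + 2)) / t) ^ ((n:ℝ) - ε) * t ^ (n - 1)
      = (2:ℝ) ^ (ε - (n:ℝ)) / ε * (a k ^ ε - a (k+1) ^ ε) := by
    intro k
    have hA : (0:ℝ) < a (k+1) / 2 ^ (k+1) := div_pos (hpos _) (by positivity)
    have hAB : a (k+1) / 2^(k+1) ≤ a k / (2:ℝ)^(k+1) := by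
      gcongr
      exact (hanti (Nat.lt_succ_self k)).le
    have hEq : Set.EqOn (fun t : ℝ => ((1 / 2 ^ (k + 2)) / t) ^ ((n:ℝ) - ε) * t ^ (n - 1))
        (fun t : ℝ => ((1:ℝ) / 2 ^ (k + 2)) ^ ((n:ℝ) - ε) * t ^ (ε - 1))
        (Set.uIcc (a (k+1)/2^(k+1)) (a k/2^(k+1))) := by
      intro t ht
      rw [Set.uIcc_of_le hAB] at ht
      have ht0 : (0:ℝ) < t := lt_of_lt_of_le hA ht.1
      simp only
      rw [Real.div_rpow (by positivity) ht0.le, div_mul_eq_mul_div, mul_div_assoc,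
        ← Real.rpow_natCast t (n-1), ← Real.rpow_sub ht0]
      congr 2
      rw [Nat.cast_sub (by omega : 1 ≤ n)]
      push_cast
      ring
    rw [intervalIntegral.integral_congr hEq, intervalIntegral.integral_const_mul,
      integral_rpow (Or.inl (by linarith : (-1:ℝ) < ε - 1))]
    have hε1 : ε - 1 + 1 = ε := by ring
    rw [hε1, Real.div_rpow (hpos k).le (by positivity),
      Real.div_rpow (hpos (k+1)).le (by positivity)]
    have key : (2:ℝ)^(n*(k+1)) * (((1:ℝ)/(2:ℝ)^(k+2))^((n:ℝ)-ε) / ((2:ℝ)^(k+1))^ε)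
        = (2:ℝ)^(ε - (n:ℝ)) := by
      rw [one_div, ← Real.rpow_natCast (2:ℝ) (n*(k+1)), ← Real.rpow_natCast (2:ℝ) (k+2),
        ← Real.rpow_natCast (2:ℝ) (k+1), ← Real.rpow_neg (by norm_num : (0:ℝ) ≤ 2),
        ← Real.rpow_mul (by norm_num : (0:ℝ) ≤ 2), ← Real.rpow_mul (by norm_num : (0:ℝ) ≤ 2), ← mul_div_assoc,
        ← Real.rpow_add (by norm_num : (0:ℝ) < 2), ← Real.rpow_sub (by norm_num : (0:ℝ) < 2)]
      congr 1
      push_cast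
      ring
    rw [← key]
    have hw : ((2:ℝ)^(k+1):ℝ) ^ ε ≠ 0 := by positivity
    field_simp
  -- telescoping sum
  have hsum : HasSum (fun k : ℕ => a k ^ ε - a (k+1) ^ ε) 1 := by
    have hnn : ∀ k : ℕ, 0 ≤ a k ^ ε - a (k+1) ^ ε := by
      intro k
      have := Real.rpow_le_rpow (hpos (k+1)).le (hanti (Nat.lt_succ_self k)).le hε0.le
      linarith
    rw [hasSum_iff_tendsto_nat_of_nonneg hnn]
    have h1 : ∀ m : ℕ, ∑ i ∈ Finset.range m, (a i ^ ε - a (i+1) ^ ε) = 1 - a m ^ ε := by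
      intro m
      rw [Finset.sum_range_sub' (fun i => a i ^ ε), ha0, Real.one_rpow]
    simp only [h1]
    have h0 : Tendsto (fun m => a m ^ ε) atTop (nhds 0) := by
      have := halim.rpow_const (Or.inr hε0.le)
      rwa [Real.zero_rpow hε0.ne'] at this
    simpa using tendsto_const_nhds.sub h0
  calc ε * ∑' k : ℕ, (2:ℝ) ^ (n * (k + 1)) *
        ∫ t in (a (k + 1) / 2 ^ (k + 1))..(a k / 2 ^ (k + 1)),
          ((1 / 2 ^ (k + 2)) / t) ^ ((n:ℝ) - ε) * t ^ (n - 1)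
      = ε * ∑' k : ℕ, (2:ℝ) ^ (ε - (n:ℝ)) / ε * (a k ^ ε - a (k+1) ^ ε) := by
        rw [tsum_congr hC]
    _ = ε * ((2:ℝ) ^ (ε - (n:ℝ)) / ε * 1) := by
        rw [(hsum.mul_left _).tsum_eq]
    _ = (2:ℝ) ^ (ε - (n:ℝ)) := by field_simp
    _ ≤ 1 := Real.rpow_le_one_of_one_le_of_nonpos one_le_two (by linarith)
end
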